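/- Let m = Σ_{i=1}^t m_i where the m_i are independent Bernoulli(p_i) random variables, let μ = Σ_{i=1}^t p_i, and conditionally on m let X ~ NBinom(m, q) (the number of Bernoulli(q) trials needed for m successes). Then for every real k with 1 < k ≤ 4, Pr[X ≥ k·μ/q] ≤ exp(−(√k − 1)²μ/3) + exp(−kμ(1 − 1/√k)²/2). -/

import Mathlib

open Finset Real

private lemma bgtb_log_chord {x : ℝ} (h0 : 0 ≤ x) (h1 : x ≤ 1) :
    x * Real.log 2 ≤ Real.log (1 + x) := by
  have hcc : ConcaveOn ℝ (Set.Ioi 0) Real.log := strictConcaveOn_log_Ioi.concaveOn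
  have hc := hcc.2 (Set.mem_Ioi.2 one_pos)
      (Set.mem_Ioi.2 two_pos) (show (0:ℝ) ≤ 1 - x by linarith) h0
      (show (1 - x) + x = 1 by ring)
  simp only [smul_eq_mul, Real.log_one, mul_zero, zero_add] at hc
  have he : (1 - x) * (1 : ℝ) + x * 2 = 1 + x := by ring
  rw [he] at hc
  exact hc

private lemma bgtb_hasDeriv1 (y : ℝ) (hy : 0 < 1 + y) :
    HasDerivAt (fun z : ℝ => (1 + z) * Real.log (1 + z) - z - z ^ 2 / 3)
      (Real.log (1 + y) - 2 * y / 3) y := by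
  have h1 : HasDerivAt (fun z : ℝ => 1 + z) 1 y := by
    simpa using (hasDerivAt_id y).const_add (1 : ℝ)
  have h2 : HasDerivAt (fun z : ℝ => Real.log (1 + z)) ((1 + y)⁻¹ * 1) y :=
    (Real.hasDerivAt_log hy.ne').comp y h1
  have h3 := h1.mul h2
  have h4 : HasDerivAt (fun z : ℝ => z ^ 2 / 3) (2 * y / 3) y := by
    have := (hasDerivAt_pow 2 y).div_const 3
    simpa using this
  have h5 := (h3.sub (hasDerivAt_id y)).sub h4
  have hX : (1 + y) * (1 + y)⁻¹ = 1 := mul_inv_cancel₀ hy.ne'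
  exact h5.congr_deriv (by linear_combination hX)

private lemma bgtb_lemA {x : ℝ} (h0 : 0 ≤ x) (h1 : x ≤ 1) :
    x ^ 2 / 3 ≤ (1 + x) * Real.log (1 + x) - x := by
  have key : MonotoneOn (fun z : ℝ => (1 + z) * Real.log (1 + z) - z - z ^ 2 / 3)
      (Set.Icc 0 1) := by
    apply monotoneOn_of_deriv_nonneg (convex_Icc 0 1)
    · intro y hy
      exact (bgtb_hasDeriv1 y (by have := hy.1; simp at this ⊢; linarith)).differentiableAt.continuousAt.continuousWithinAt
    · intro y hy
      rw [interior_Icc] at hy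
      exact (bgtb_hasDeriv1 y (by linarith [hy.1])).differentiableAt.differentiableWithinAt
    · intro y hy
      rw [interior_Icc] at hy
      rw [(bgtb_hasDeriv1 y (by linarith [hy.1])).deriv]
      have hch := bgtb_log_chord hy.1.le hy.2.le
      have hl2 : (2 : ℝ) / 3 ≤ Real.log 2 := by
        have := Real.log_two_gt_d9; norm_num at this ⊢; linarith
      nlinarith [hy.1.le]
  have h := key (Set.left_mem_Icc.2 zero_le_one) (Set.mem_Icc.2 ⟨h0, h1⟩) h0
  simp only [add_zero, Real.log_one, mul_zero, sub_zero, zero_pow, ne_eq,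
    OfNat.ofNat_ne_zero, not_false_eq_true, zero_div, mul_one] at h
  linarith

private lemma bgtb_hasDeriv2 (y : ℝ) (hy : 0 < 1 - y) :
    HasDerivAt (fun z : ℝ => (1 - z) * Real.log (1 - z) + z - z ^ 2 / 2)
      (-Real.log (1 - y) - y) y := by
  have h1 : HasDerivAt (fun z : ℝ => 1 - z) (-1) y := by
    simpa using (hasDerivAt_id y).const_sub (1 : ℝ)
  have h2 : HasDerivAt (fun z : ℝ => Real.log (1 - z)) ((1 - y)⁻¹ * (-1)) y :=
    (Real.hasDerivAt_log hy.ne').comp y h1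
  have h3 := h1.mul h2
  have h4 : HasDerivAt (fun z : ℝ => z ^ 2 / 2) y y := by
    have := (hasDerivAt_pow 2 y).div_const 2
    simpa using this
  have h5 := (h3.add (hasDerivAt_id y)).sub h4
  have hX : (1 - y) * (1 - y)⁻¹ = 1 := mul_inv_cancel₀ hy.ne'
  exact h5.congr_deriv (by linear_combination (-1 : ℝ) * hX)

private lemma bgtb_lemB {x : ℝ} (h0 : 0 ≤ x) (h1 : x ≤ 1 / 2) :
    -x + x ^ 2 / 2 ≤ (1 - x) * Real.log (1 - x) := by
  have key : MonotoneOn (fun z : ℝ => (1 - z) * Real.log (1 - z) + z - z ^ 2 / 2)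
      (Set.Icc 0 (1 / 2)) := by
    apply monotoneOn_of_deriv_nonneg (convex_Icc 0 (1 / 2))
    · intro y hy
      have : (0:ℝ) < 1 - y := by have := hy.2; simp at this; linarith
      exact (bgtb_hasDeriv2 y this).differentiableAt.continuousAt.continuousWithinAt
    · intro y hy
      rw [interior_Icc] at hy
      exact (bgtb_hasDeriv2 y (by linarith [hy.2])).differentiableAt.differentiableWithinAt
    · intro y hy
      rw [interior_Icc] at hy
      rw [(bgtb_hasDeriv2 y (by linarith [hy.2])).deriv]
      have hlog : Real.log (1 - y) ≤ (1 - y) - 1 :=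
        Real.log_le_sub_one_of_pos (by linarith [hy.2])
      linarith
  have h := key (Set.left_mem_Icc.2 (by norm_num)) (Set.mem_Icc.2 ⟨h0, h1⟩) h0
  simp only [sub_zero, Real.log_one, mul_zero, add_zero, zero_pow, ne_eq,
    OfNat.ofNat_ne_zero, not_false_eq_true, zero_div, mul_one] at h
  linarith

private lemma bgtb_binom_sum_le (N L : ℕ) {q r : ℝ} (hq0 : 0 ≤ q) (hq1 : q ≤ 1) (hr : 0 ≤ r) :
    ∑ j ∈ Finset.range L, (N.choose j : ℝ) * q ^ j * (1 - q) ^ (N - j) * r ^ j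
      ≤ (q * r + (1 - q)) ^ N := by
  have h1q : (0 : ℝ) ≤ 1 - q := by linarith
  have hb : ∀ j, 0 ≤ (N.choose j : ℝ) * q ^ j * (1 - q) ^ (N - j) * r ^ j := by
    intro j; positivity
  have hsub : ∑ j ∈ Finset.range L, (N.choose j : ℝ) * q ^ j * (1 - q) ^ (N - j) * r ^ j
      ≤ ∑ j ∈ Finset.range (max L (N + 1)), (N.choose j : ℝ) * q ^ j * (1 - q) ^ (N - j) * r ^ j :=
    Finset.sum_le_sum_of_subset_of_nonneg (Finset.range_subset_range.2 (le_max_left _ _))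
      (fun j _ _ => hb j)
  have heq : ∑ j ∈ Finset.range (max L (N + 1)), (N.choose j : ℝ) * q ^ j * (1 - q) ^ (N - j) * r ^ j
      = ∑ j ∈ Finset.range (N + 1), (N.choose j : ℝ) * q ^ j * (1 - q) ^ (N - j) * r ^ j := by
    symm
    apply Finset.sum_subset (Finset.range_subset_range.2 (le_max_right _ _))
    intro j hj hj2
    have hNj : N < j := by
      simp only [Finset.mem_range, not_lt] at hj2
      omega
    simp [Nat.choose_eq_zero_of_lt hNj]
  rw [heq] at hsub
  refine hsub.trans (le_of_eq ?_)
  rw [add_pow]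
  apply Finset.sum_congr rfl
  intro j hj
  rw [mul_pow]
  ring

set_option maxHeartbeats 1600000 in
/-- **Tail bound for a binomial number of geometrics.**
Let `m = Σ_{i=1}^t m_i` where the `m_i` are independent `Bernoulli(p_i)`
variables, let `μ = Σ_{i=1}^t p_i`, and conditionally on `m` let
`X ~ NBinom(m, q)` be the number of `Bernoulli(q)` trials needed for `m`
successes. Then for every real `k` with `1 < k ≤ 4`,
`Pr[X ≥ k·μ/q] ≤ exp(−(√k − 1)²μ/3) + exp(−kμ(1 − 1/√k)²/2)`.

The probability is written out explicitly: we sum over the possible outcomes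
`S ⊆ {1,…,t}` of the Bernoulli vector (`S` is the set of successes, so `m = |S|`),
and use the identity `Pr[X ≥ M] = Pr[Binom(M − 1, q) < m]` with
`M = ⌈k·μ/q⌉` (as `X` is integer valued, `X ≥ k·μ/q ↔ X ≥ M`). -/
theorem binom_of_geo_tail_bound (t : ℕ) (p : Fin t → ℝ) (hp : ∀ i, 0 ≤ p i ∧ p i ≤ 1)
    (q : ℝ) (hq0 : 0 < q) (hq1 : q ≤ 1) (k : ℝ) (hk1 : 1 < k) (hk4 : k ≤ 4)
    (μ : ℝ) (hμ : μ = ∑ i, p i) (hμpos : 0 < μ) :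
    (∑ S : Finset (Fin t),
        ((∏ i ∈ S, p i) * ∏ i ∈ Sᶜ, (1 - p i)) *
          ∑ j ∈ Finset.range S.card,
            ((⌈k * μ / q⌉₊ - 1).choose j : ℝ) * q ^ j * (1 - q) ^ (⌈k * μ / q⌉₊ - 1 - j)) ≤
      Real.exp (-((Real.sqrt k - 1) ^ 2 * μ / 3)) +
        Real.exp (-(k * μ * (1 - 1 / Real.sqrt k) ^ 2 / 2)) := by
  classical
  set N : ℕ := ⌈k * μ / q⌉₊ - 1 with hN
  set P : Finset (Fin t) → ℝ := fun S => (∏ i ∈ S, p i) * ∏ i ∈ Sᶜ, (1 - p i) with hPdef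
  set b : ℕ → ℝ := fun j => ((N.choose j : ℝ)) * q ^ j * (1 - q) ^ (N - j) with hbdef
  set sk : ℝ := Real.sqrt k with hsk
  have hk0 : (0 : ℝ) ≤ k := by linarith
  have hsk1 : 1 < sk := by
    rw [hsk, show (1 : ℝ) = Real.sqrt 1 by simp]
    exact Real.sqrt_lt_sqrt (by norm_num) hk1
  have hsk0 : 0 < sk := by linarith
  have hsk2 : sk ≤ 2 := by
    rw [hsk, show (2 : ℝ) = Real.sqrt 4 by
      rw [show (4 : ℝ) = 2 ^ 2 by norm_num, Real.sqrt_sq (by norm_num)]]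
    exact Real.sqrt_le_sqrt hk4
  have hksq : sk * sk = k := Real.mul_self_sqrt hk0
  set ε : ℝ := sk - 1 with hε
  have hε0 : 0 < ε := by simp only [hε]; linarith
  have hε1 : ε ≤ 1 := by simp only [hε]; linarith
  set δ : ℝ := 1 - 1 / sk with hδ
  have hδ0 : 0 < δ := by
    have : 1 / sk < 1 := by rw [div_lt_one hsk0]; exact hsk1
    simp only [hδ]; linarith
  have hδh : δ ≤ 1 / 2 := by
    have : (1 : ℝ) / 2 ≤ 1 / sk := by
      apply div_le_div_of_nonneg_left (by norm_num) hsk0 hsk2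
    simp only [hδ]; linarith
  have hu : 1 - δ = 1 / sk := by simp [hδ]
  have hskk : k * (1 - δ) = sk := by
    rw [hu]; field_simp; rw [sq]; exact hksq.symm
  set a : ℝ := sk * μ with ha
  have ha0 : 0 < a := mul_pos hsk0 hμpos
  set lam : ℝ := Real.log sk with hlam
  have hlam0 : 0 < lam := Real.log_pos hsk1
  have hexplam : Real.exp lam = sk := Real.exp_log hsk0
  have hlog1δ : Real.log (1 - δ) = -lam := by
    rw [hu, hlam, one_div, Real.log_inv]
  have hlamδ : δ ≤ lam := by
    have h := Real.log_le_sub_one_of_pos (show (0:ℝ) < 1 - δ by rw [hu]; positivity)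
    rw [hlog1δ] at h
    linarith
  -- nonnegativity
  have h1q : (0:ℝ) ≤ 1 - q := by linarith
  have hPnn : ∀ S : Finset (Fin t), 0 ≤ P S := by
    intro S
    apply mul_nonneg
    · exact Finset.prod_nonneg fun i _ => (hp i).1
    · exact Finset.prod_nonneg fun i _ => by linarith [(hp i).2]
  have hbnn : ∀ j, 0 ≤ b j := by
    intro j
    have hq0' : (0:ℝ) ≤ q := hq0.le
    simp only [hbdef]
    positivity
  -- MGF identity
  have hMGF : ∀ r : ℝ, ∑ S : Finset (Fin t), P S * r ^ S.card
      = ∏ i, (p i * r + (1 - p i)) := by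
    intro r
    rw [Fintype.prod_add]
    apply Finset.sum_congr rfl
    intro S _
    simp only [hPdef]
    rw [Finset.prod_mul_distrib, Finset.prod_const]
    ring
  have hPsum : ∑ S : Finset (Fin t), P S = 1 := by
    have h := hMGF 1
    simp only [one_pow, mul_one] at h
    rw [h]
    simp
  -- partial binomial sums are ≤ 1
  have hF1 : ∀ L : ℕ, ∑ j ∈ Finset.range L, b j ≤ 1 := by
    intro L
    have h := bgtb_binom_sum_le N L hq0.le hq1 (zero_le_one)
    simp only [one_pow, mul_one] at h
    calc ∑ j ∈ Finset.range L, b j = ∑ j ∈ Finset.range L,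
          (N.choose j : ℝ) * q ^ j * (1 - q) ^ (N - j) := rfl
      _ ≤ (q + (1 - q)) ^ N := h
      _ = 1 := by norm_num
  -- PART A : Chernoff upper tail for the Bernoulli sum
  have hA : ∑ S ∈ Finset.univ.filter (fun S : Finset (Fin t) => a ≤ (S.card : ℝ)), P S
      ≤ Real.exp (-(ε ^ 2 * μ / 3)) := by
    have hmark : Real.exp (lam * a) *
        (∑ S ∈ Finset.univ.filter (fun S : Finset (Fin t) => a ≤ (S.card : ℝ)), P S)
        ≤ ∑ S : Finset (Fin t), P S * sk ^ S.card := by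
      rw [Finset.mul_sum]
      refine le_trans (Finset.sum_le_sum ?_)
        (Finset.sum_le_sum_of_subset_of_nonneg (Finset.filter_subset _ _)
          (fun S _ _ => mul_nonneg (hPnn S) (pow_nonneg hsk0.le _)))
      intro S hS
      have hcard : a ≤ (S.card : ℝ) := (Finset.mem_filter.1 hS).2
      have hle : Real.exp (lam * a) ≤ sk ^ S.card := by
        rw [← hexplam, ← Real.exp_nat_mul]
        apply Real.exp_le_exp.2
        calc lam * a ≤ lam * S.card := mul_le_mul_of_nonneg_left hcard hlam0.le
          _ = (S.card : ℝ) * lam := mul_comm _ _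
      calc Real.exp (lam * a) * P S = P S * Real.exp (lam * a) := mul_comm _ _
        _ ≤ P S * sk ^ S.card := mul_le_mul_of_nonneg_left hle (hPnn S)
    have hprod : ∑ S : Finset (Fin t), P S * sk ^ S.card ≤ Real.exp (ε * μ) := by
      rw [hMGF sk]
      have hstep : ∏ i, (p i * sk + (1 - p i)) ≤ ∏ i, Real.exp (p i * ε) := by
        apply Finset.prod_le_prod
        · intro i _
          nlinarith [(hp i).1, (hp i).2]
        · intro i _
          have : p i * sk + (1 - p i) = p i * ε + 1 := by rw [hε]; ring
          rw [this]
          exact Real.add_one_le_exp _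
      refine hstep.trans (le_of_eq ?_)
      rw [← Real.exp_sum]
      congr 1
      rw [hμ, Finset.mul_sum]
      exact Finset.sum_congr rfl fun i _ => mul_comm _ _
    have hepos := Real.exp_pos (lam * a)
    have hfinal : ∑ S ∈ Finset.univ.filter (fun S : Finset (Fin t) => a ≤ (S.card : ℝ)), P S
        ≤ Real.exp (ε * μ - lam * a) := by
      rw [Real.exp_sub]
      rw [le_div_iff₀ hepos]
      calc (∑ S ∈ Finset.univ.filter (fun S : Finset (Fin t) => a ≤ (S.card : ℝ)), P S) *
            Real.exp (lam * a)
          = Real.exp (lam * a) * ∑ S ∈ Finset.univ.filter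
              (fun S : Finset (Fin t) => a ≤ (S.card : ℝ)), P S := mul_comm _ _
        _ ≤ ∑ S : Finset (Fin t), P S * sk ^ S.card := hmark
        _ ≤ Real.exp (ε * μ) := hprod
    refine hfinal.trans (Real.exp_le_exp.2 ?_)
    -- ε μ - lam a ≤ -(ε²μ/3)
    have hlA := bgtb_lemA hε0.le hε1
    have h1ε : 1 + ε = sk := by rw [hε]; ring
    have hlaa : lam * a = ((1 + ε) * Real.log (1 + ε)) * μ := by
      rw [h1ε, ha, hlam]; ring
    rw [hlaa]
    nlinarith [hμpos]
  -- PART B : Chernoff lower tail for the binomial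
  set c : ℕ := ⌈a⌉₊ - 1 with hc
  set T : ℝ := ∑ j ∈ Finset.range c, b j with hT
  have hTnn : 0 ≤ T := Finset.sum_nonneg fun j _ => hbnn j
  have hTle : T ≤ Real.exp ((a - 1) * lam + (N : ℝ) * (q * (1 / sk - 1))) := by
    have hstep1 : T ≤ Real.exp ((a - 1) * lam) *
        ∑ j ∈ Finset.range c, b j * (1 / sk) ^ j := by
      rw [Finset.mul_sum, hT]
      apply Finset.sum_le_sum
      intro j hj
      have hja : (j : ℝ) ≤ a - 1 := by
        have hjc : j + 2 ≤ ⌈a⌉₊ := by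
          have := Finset.mem_range.1 hj
          omega
        have h2 : ((j : ℝ) + 2) ≤ (⌈a⌉₊ : ℝ) := by exact_mod_cast hjc
        have h3 : (⌈a⌉₊ : ℝ) < a + 1 := Nat.ceil_lt_add_one ha0.le
        linarith
      have hpow : (1 / sk : ℝ) ^ j = Real.exp ((j : ℝ) * -lam) := by
        have h1 : (1 / sk : ℝ) = Real.exp (-lam) := by
          rw [Real.exp_neg, hexplam, one_div]
        rw [h1, ← Real.exp_nat_mul]
      have hone : 1 ≤ Real.exp ((a - 1) * lam) * (1 / sk) ^ j := by
        rw [hpow, ← Real.exp_add]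
        apply Real.one_le_exp
        have h2 := mul_le_mul_of_nonneg_right hja hlam0.le
        linarith
      calc b j = b j * 1 := (mul_one _).symm
        _ ≤ b j * (Real.exp ((a - 1) * lam) * (1 / sk) ^ j) :=
            mul_le_mul_of_nonneg_left hone (hbnn j)
        _ = Real.exp ((a - 1) * lam) * (b j * (1 / sk) ^ j) := by ring
    have hstep2 : ∑ j ∈ Finset.range c, b j * (1 / sk) ^ j
        ≤ (q * (1 / sk) + (1 - q)) ^ N :=
      bgtb_binom_sum_le N c hq0.le hq1 (by positivity)
    have hstep3 : (q * (1 / sk) + (1 - q)) ^ N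
        ≤ Real.exp ((N : ℝ) * (q * (1 / sk - 1))) := by
      have hbase0 : (0:ℝ) ≤ q * (1 / sk) + (1 - q) := by positivity
      have hbase : q * (1 / sk) + (1 - q) ≤ Real.exp (q * (1 / sk - 1)) := by
        have h3 := Real.add_one_le_exp (q * (1 / sk - 1))
        have h4 : q * (1 / sk) + (1 - q) = q * (1 / sk - 1) + 1 := by ring
        rw [h4]
        exact h3
      calc (q * (1 / sk) + (1 - q)) ^ N ≤ (Real.exp (q * (1 / sk - 1))) ^ N :=
            pow_le_pow_left₀ hbase0 hbase N
        _ = Real.exp ((N : ℝ) * (q * (1 / sk - 1))) := (Real.exp_nat_mul _ N).symm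
    calc T ≤ Real.exp ((a - 1) * lam) * ∑ j ∈ Finset.range c, b j * (1 / sk) ^ j := hstep1
      _ ≤ Real.exp ((a - 1) * lam) * (q * (1 / sk) + (1 - q)) ^ N :=
          mul_le_mul_of_nonneg_left (hstep2.trans_eq rfl) (Real.exp_pos _).le
      _ ≤ Real.exp ((a - 1) * lam) * Real.exp ((N : ℝ) * (q * (1 / sk - 1))) :=
          mul_le_mul_of_nonneg_left hstep3 (Real.exp_pos _).le
      _ = Real.exp ((a - 1) * lam + (N : ℝ) * (q * (1 / sk - 1))) := (Real.exp_add _ _).symm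
  have hTfinal : T ≤ Real.exp (-(k * μ * δ ^ 2 / 2)) := by
    refine hTle.trans (Real.exp_le_exp.2 ?_)
    -- exponent arithmetic
    have hM1 : 1 ≤ ⌈k * μ / q⌉₊ := Nat.one_le_ceil_iff.2 (by positivity)
    have hNcast : (N : ℝ) = (⌈k * μ / q⌉₊ : ℝ) - 1 := by
      rw [hN]
      push_cast [Nat.cast_sub hM1]
      ring
    have hceil : k * μ / q ≤ (⌈k * μ / q⌉₊ : ℝ) := Nat.le_ceil _
    have hNq : k * μ - q ≤ (N : ℝ) * q := by
      rw [hNcast]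
      have h := mul_le_mul_of_nonneg_right (by linarith : k * μ / q - 1 ≤ (⌈k * μ / q⌉₊ : ℝ) - 1) hq0.le
      calc k * μ - q = (k * μ / q - 1) * q := by field_simp
        _ ≤ ((⌈k * μ / q⌉₊ : ℝ) - 1) * q := h
    have hlB := bgtb_lemB hδ0.le hδh
    rw [hlog1δ] at hlB
    -- hlB : -δ + δ^2/2 ≤ (1 - δ) * (-lam)
    have haeq : a = k * (1 - δ) * μ := by rw [ha, hskk]
    have huδ : 1 / sk - 1 = -δ := by rw [hδ]; ring
    rw [huδ, haeq]
    -- goal: (k*(1-δ)*μ - 1)*lam + N*(q*(-δ)) ≤ -(k*μ*δ^2/2)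
    have hNqδ : (N : ℝ) * (q * (-δ)) ≤ -(k * μ - q) * δ := by
      have := mul_le_mul_of_nonneg_right hNq hδ0.le
      nlinarith
    have hmain : k * (1 - δ) * μ * lam ≤ k * μ * (δ - δ ^ 2 / 2) := by
      have hkμ : 0 < k * μ := by positivity
      nlinarith
    have hqδ : q * δ ≤ δ := by nlinarith
    clear_value N sk δ lam
    linarith [hmain, hNqδ, hqδ, hlamδ]
  have hB : ∑ S ∈ Finset.univ.filter (fun S : Finset (Fin t) => ¬ a ≤ (S.card : ℝ)),
      P S * ∑ j ∈ Finset.range S.card, b j ≤ Real.exp (-(k * μ * δ ^ 2 / 2)) := by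
    have hstep : ∑ S ∈ Finset.univ.filter (fun S : Finset (Fin t) => ¬ a ≤ (S.card : ℝ)),
        P S * ∑ j ∈ Finset.range S.card, b j
        ≤ ∑ S ∈ Finset.univ.filter (fun S : Finset (Fin t) => ¬ a ≤ (S.card : ℝ)), P S * T := by
      apply Finset.sum_le_sum
      intro S hS
      have hcard : (S.card : ℝ) < a := lt_of_not_ge (Finset.mem_filter.1 hS).2
      have hcc : S.card ≤ c := by
        have h1 : S.card < ⌈a⌉₊ := Nat.lt_ceil.2 hcard
        omega
      have hFT : ∑ j ∈ Finset.range S.card, b j ≤ T := by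
        rw [hT]
        exact Finset.sum_le_sum_of_subset_of_nonneg (Finset.range_subset_range.2 hcc)
          (fun j _ _ => hbnn j)
      exact mul_le_mul_of_nonneg_left hFT (hPnn S)
    refine hstep.trans ?_
    have : ∑ S ∈ Finset.univ.filter (fun S : Finset (Fin t) => ¬ a ≤ (S.card : ℝ)), P S * T
        ≤ ∑ S : Finset (Fin t), P S * T :=
      Finset.sum_le_sum_of_subset_of_nonneg (Finset.filter_subset _ _)
        (fun S _ _ => mul_nonneg (hPnn S) hTnn)
    refine this.trans ?_
    rw [← Finset.sum_mul, hPsum, one_mul]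
    exact hTfinal
  -- assemble
  calc (∑ S : Finset (Fin t), P S * ∑ j ∈ Finset.range S.card, b j)
      = (∑ S ∈ Finset.univ.filter (fun S : Finset (Fin t) => a ≤ (S.card : ℝ)),
          P S * ∑ j ∈ Finset.range S.card, b j) +
        ∑ S ∈ Finset.univ.filter (fun S : Finset (Fin t) => ¬ a ≤ (S.card : ℝ)),
          P S * ∑ j ∈ Finset.range S.card, b j :=
        (Finset.sum_filter_add_sum_filter_not _ _ _).symm
    _ ≤ Real.exp (-(ε ^ 2 * μ / 3)) + Real.exp (-(k * μ * δ ^ 2 / 2)) := by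
        apply add_le_add _ hB
        calc ∑ S ∈ Finset.univ.filter (fun S : Finset (Fin t) => a ≤ (S.card : ℝ)),
              P S * ∑ j ∈ Finset.range S.card, b j
            ≤ ∑ S ∈ Finset.univ.filter (fun S : Finset (Fin t) => a ≤ (S.card : ℝ)), P S := by
              apply Finset.sum_le_sum
              intro S _
              calc P S * ∑ j ∈ Finset.range S.card, b j ≤ P S * 1 :=
                    mul_le_mul_of_nonneg_left (hF1 _) (hPnn S)
                _ = P S := mul_one _
          _ ≤ Real.exp (-(ε ^ 2 * μ / 3)) := hA
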